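/- Consequently, under the hypotheses of the previous statement, every finite path π in G satisfies: the word f obtained by concatenating the labels along π has ⟨x, φ(f)⟩ ≤ N·h·max_i x_i. In particular, weighted balances of infixes read along runs are uniformly bounded by a constant depending only on G, h, and x. -/

import Mathlib

/-- The alphabet Σ_n: letter `(i, true)` is `a_i`, `(i, false)` is `ā_i`. -/
abbrev Alph (n : ℕ) := Fin n × Bool

abbrev Word (n : ℕ) := List (Alph n)

/-- The balance function φ_i(w) = |w|_{a_i} - |w|_{ā_i}. -/
def phi {n : ℕ} (w : Word n) (i : Fin n) : ℤ :=
  (w.count (i, true) : ℤ) - (w.count (i, false) : ℤ)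

/-- The prefix of length k of an infinite word. -/
def pre {A : Type*} (w : ℕ → A) (k : ℕ) : List A := (List.range k).map w

/-- The (finite) infix w[p..q) of an infinite word. -/
def seg {A : Type*} (w : ℕ → A) (p q : ℕ) : List A :=
  (List.range (q - p)).map (fun j => w (p + j))

/-- The weighted balance ⟨x, φ(w)⟩. -/
def wbal {n : ℕ} (x : Fin n → ℕ) (w : Word n) : ℤ :=
  ∑ i, (x i : ℤ) * phi w i

/-- The basic separator P_{i,k}: words with a prefix u of negative i-balance all of whose
prefixes have i-balance at most k. -/
def Pset {n : ℕ} (i : Fin n) (k : ℤ) : Set (ℕ → Alph n) :=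
  {w | ∃ m : ℕ, phi (pre w m) i < 0 ∧ ∀ j ≤ m, phi (pre w j) i ≤ k}

/-- The basic separator S_{x,k}: words decomposing as u v₁ v₂ ⋯ such that every infix of
v₁ v₂ ⋯ has x-weighted balance at most k and each v_ℓ has negative x-weighted balance. -/
def Sset {n : ℕ} (x : Fin n → ℕ) (k : ℤ) : Set (ℕ → Alph n) :=
  {w | ∃ (u : Word n) (v : ℕ → Word n),
    (∀ ℓ, v ℓ ≠ []) ∧
    (∀ m : ℕ, pre w (u ++ ((List.range m).map v).flatten).length
        = u ++ ((List.range m).map v).flatten) ∧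
    (∀ p q : ℕ, u.length ≤ p → p ≤ q → wbal x (seg w p q) ≤ k) ∧
    (∀ ℓ, wbal x (v ℓ) < 0)}

/-- A list of edges forms a walk: consecutive edges are compatible. -/
def IsWalk {V E : Type*} (src tgt : E → V) (es : List E) : Prop :=
  es.Chain' (fun e f => tgt e = src f)

/-- A closed walk: a nonempty walk that ends where it starts. -/
def IsClosedWalk {V E : Type*} (src tgt : E → V) (es : List E) : Prop :=
  IsWalk src tgt es ∧ es ≠ [] ∧
    ∀ h : es ≠ [], tgt (es.getLast h) = src (es.head h)

/-- A primitive (simple) cycle: a closed walk visiting no vertex twice except start/end. -/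
def IsPrimitiveCycle {V E : Type*} (src tgt : E → V) (es : List E) : Prop :=
  IsClosedWalk src tgt es ∧ (es.map src).Nodup

/-- The total weight of a walk. -/
def walkWeight {E : Type*} (c : E → ℤ) (es : List E) : ℤ := (es.map c).sum

section AuxLemmas

lemma wbal_append {n : ℕ} (x : Fin n → ℕ) (u v : Word n) :
    wbal x (u ++ v) = wbal x u + wbal x v := by
  unfold wbal phi
  rw [← Finset.sum_add_distrib]
  refine Finset.sum_congr rfl fun i _ => ?_
  simp only [List.count_append]
  push_cast
  ring

lemma wbal_nil {n : ℕ} (x : Fin n → ℕ) : wbal x ([] : Word n) = 0 := by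
  simp [wbal, phi]

lemma wbal_single {n : ℕ} (x : Fin n → ℕ) (a : Alph n) :
    wbal x [a] ≤ ((Finset.univ.sup x : ℕ) : ℤ) := by
  obtain ⟨i, b⟩ := a
  have hs : wbal x [(i,b)] = if b then (x i : ℤ) else -(x i) := by
    unfold wbal phi
    rw [Finset.sum_eq_single i]
    · cases b <;> simp [List.count_cons, List.count_nil]
    · intro j _ hj
      have h1 : ¬ ((j, true) = (i, b)) := by simp [Prod.ext_iff]; intro h; exact absurd h hj
      have h2 : ¬ ((j, false) = (i, b)) := by simp [Prod.ext_iff]; intro h; exact absurd h hj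
      simp [List.count_cons, List.count_nil, h1, h2, Ne.symm hj]
    · simp
  have hle : (x i : ℤ) ≤ ((Finset.univ.sup x : ℕ) : ℤ) := by
    exact_mod_cast Finset.le_sup (Finset.mem_univ i)
  rw [hs]
  cases b
  · simp only [if_neg Bool.false_ne_true]
    have : (0:ℤ) ≤ ((Finset.univ.sup x : ℕ) : ℤ) := Int.ofNat_nonneg _
    linarith [Int.ofNat_nonneg (x i)]
  · simpa using hle

lemma wbal_le_length {n : ℕ} (x : Fin n → ℕ) (w : Word n) :
    wbal x w ≤ (w.length : ℤ) * ((Finset.univ.sup x : ℕ) : ℤ) := by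
  induction w with
  | nil => simp [wbal_nil]
  | cons a t ih =>
      have hap := wbal_append x [a] t
      simp only [List.singleton_append] at hap
      rw [hap]
      have h1 := wbal_single x a
      simp only [List.length_cons]
      push_cast
      linarith

lemma wbal_flatten_map {n : ℕ} {E : Type*} (x : Fin n → ℕ) (lab : E → Word n)
    (es : List E) :
    wbal x ((es.map lab).flatten) = (es.map (fun e => wbal x (lab e))).sum := by
  induction es with
  | nil => simp [wbal_nil]
  | cons e t ih => simp [wbal_append, ih]

lemma walk_step {V E : Type*} (src tgt : E → V) {es : List E} (h : IsWalk src tgt es)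
    {i : ℕ} (hi : i + 1 < es.length) :
    tgt (es[i]'(by omega)) = src es[i+1] := by
  have := List.isChain_iff_getElem.mp h i (by omega)
  simpa using this

lemma split_dup {V E : Type*} (src tgt : E → V) {es : List E}
    (hwalk : IsWalk src tgt es) {p q : ℕ}
    (hpq : p < q) (hq : q < es.length) (heq : src (es[p]'(by omega)) = src es[q]) :
    es = es.take p ++ ((es.drop p).take (q - p)) ++ es.drop q ∧
    IsClosedWalk src tgt ((es.drop p).take (q - p)) ∧
    IsWalk src tgt (es.take p ++ es.drop q) ∧
    (IsClosedWalk src tgt es → IsClosedWalk src tgt (es.take p ++ es.drop q)) := by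
  set B := (es.drop p).take (q - p) with hB
  have hBlen : B.length = q - p := by
    simp only [hB, List.length_take, List.length_drop]
    omega
  have hBget : ∀ (j : ℕ) (hj : j < q - p), B[j]'(by omega) = es[p+j]'(by omega) := by
    intro j hj
    simp only [hB, List.getElem_take, List.getElem_drop]
  have hBne : B ≠ [] := by
    intro hc
    rw [hc] at hBlen
    simp at hBlen; omega
  have hsplit : es = es.take p ++ B ++ es.drop q := by
    have h2 : es.drop q = (es.drop p).drop (q - p) := by
      rw [List.drop_drop]; congr 1; omega
    rw [List.append_assoc, hB, h2, List.take_append_drop, List.take_append_drop]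
  have hBwalk : IsWalk src tgt B := hwalk.infix ⟨es.take p, es.drop q, hsplit.symm⟩
  have hBclosed : IsClosedWalk src tgt B := by
    refine ⟨hBwalk, hBne, fun hne => ?_⟩
    have hlast : B.getLast hne = es[q-1]'(by omega) := by
      rw [List.getLast_eq_getElem]
      rw [hBget (B.length - 1) (by omega)]
      congr 1
      omega
    have hhead : B.head hne = es[p]'(by omega) := by
      rw [List.head_eq_getElem_zero, hBget 0 (by omega)]
      congr 1
    rw [hlast, hhead, heq]
    have := walk_step src tgt hwalk (i := q-1) (by omega)
    convert this using 3 <;> omega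
  have hC : es.drop q ≠ [] := by
    intro hc
    have := congrArg List.length hc
    simp at this; omega
  have hChead : (es.drop q).head hC = es[q] := by
    rw [List.head_eq_getElem_zero]
    simp only [List.getElem_drop, Nat.add_zero]
  have hplen : (es.take p).length = p := by
    rw [List.length_take]; omega
  have houter : IsWalk src tgt (es.take p ++ es.drop q) := by
    show List.IsChain _ _
    rw [List.isChain_append]
    refine ⟨hwalk.take p, hwalk.drop q, ?_⟩
    intro e he f hf
    have hpne : es.take p ≠ [] := by
      intro hc; rw [hc] at he; simp at he
    have hp0 : 0 < p := by
      by_contra hp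
      exact hpne (by simp [show p = 0 by omega])
    rw [List.getLast?_eq_getLast_of_ne_nil hpne] at he
    rw [List.head?_eq_head hC] at hf
    simp only [Option.mem_def, Option.some_inj] at he hf
    have he' : e = es[p-1]'(by omega) := by
      rw [← he, List.getLast_eq_getElem]
      simp only [List.getElem_take, hplen]
    rw [he', ← hf, hChead, ← heq]
    have := walk_step src tgt hwalk (i := p-1) (by omega)
    convert this using 3 <;> omega
  refine ⟨hsplit, hBclosed, houter, fun hcl => ?_⟩
  have hone : es.take p ++ es.drop q ≠ [] := by
    intro hc
    have := congrArg List.length hc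
    simp at this; omega
  refine ⟨houter, hone, fun hne => ?_⟩
  have hesne : es ≠ [] := by
    intro hc; rw [hc] at hq; simp at hq
  have hlast : (es.take p ++ es.drop q).getLast hne = es.getLast hesne := by
    rw [List.getLast_append_of_right_ne_nil _ _ hC, List.getLast_eq_getElem, List.getLast_eq_getElem]
    rw [List.getElem_drop]
    congr 1
    simp only [List.length_drop]
    omega
  have hhead : src ((es.take p ++ es.drop q).head hne) = src (es.head hesne) := by
    by_cases hp0 : p = 0
    · subst hp0
      rw [List.head_eq_getElem_zero, List.head_eq_getElem_zero]
      have h0 : (es.take 0 ++ es.drop q)[0]'(by rw [List.length_append]; simp; omega)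
          = es[q] := by
        simp only [List.take_zero, List.nil_append, List.getElem_drop, Nat.add_zero]
      rw [h0, ← heq]
    · rw [List.head_eq_getElem_zero, List.head_eq_getElem_zero]
      congr 1
      rw [List.getElem_append_left (by omega)]
      simp only [List.getElem_take]
  rw [hlast, hhead]
  exact hcl.2.2 hesne

lemma exists_dup {α : Type*} {l : List α} (h : ¬ l.Nodup) :
    ∃ (p q : ℕ) (hpq : p < q) (hq : q < l.length), l[p]'(by omega) = l[q] := by
  rw [List.nodup_iff_injective_get] at h
  simp only [Function.Injective, not_forall] at h
  obtain ⟨a, b, hab, hne⟩ := h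
  rcases lt_or_gt_of_ne (show a.val ≠ b.val from fun hc => hne (Fin.ext hc)) with hlt | hlt
  · exact ⟨a.val, b.val, hlt, b.isLt, by simpa [List.get_eq_getElem] using hab⟩
  · exact ⟨b.val, a.val, hlt, a.isLt, by simpa [List.get_eq_getElem] using hab.symm⟩

lemma closed_nonpos {n : ℕ} {V E : Type*} (src tgt : E → V) (lab : E → Word n)
    (x : Fin n → ℕ)
    (hprim : ∀ es : List E, IsPrimitiveCycle src tgt es →
      wbal x ((es.map lab).flatten) ≤ 0) :
    ∀ (N : ℕ) (es : List E), es.length ≤ N → IsClosedWalk src tgt es →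
      wbal x ((es.map lab).flatten) ≤ 0 := by
  intro N
  induction N using Nat.strong_induction_on with
  | _ N ih =>
    intro es hlen hcl
    by_cases hnd : (es.map src).Nodup
    · exact hprim es ⟨hcl, hnd⟩
    · obtain ⟨p, q, hpq, hq, heq⟩ := exists_dup hnd
      rw [List.length_map] at hq
      simp only [List.getElem_map] at heq
      obtain ⟨hsplit, hBcl, houter, hocl⟩ := split_dup src tgt hcl.1 hpq hq heq
      set f : E → ℤ := fun e => wbal x (lab e) with hf
      have hsum : (es.map f).sum
          = ((es.take p).map f).sum + (((es.drop p).take (q - p)).map f).sum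
            + ((es.drop q).map f).sum := by
        conv_lhs => rw [hsplit]
        simp only [List.map_append, List.sum_append]
      have hB : (((es.drop p).take (q - p)).map f).sum ≤ 0 := by
        rw [← wbal_flatten_map]
        refine ih (q - p) (by omega) _ ?_ hBcl
        simp only [List.length_take, List.length_drop]
        omega
      have hO : ((es.take p).map f).sum + ((es.drop q).map f).sum ≤ 0 := by
        have := ih (es.length - (q - p)) (by omega) (es.take p ++ es.drop q)
          (by rw [List.length_append, List.length_take, List.length_drop]; omega)
          (hocl hcl)
        rw [wbal_flatten_map] at this
        simpa [List.sum_append] using this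
      rw [wbal_flatten_map, hsum]
      linarith

end AuxLemmas

/-- Uniform bound on weighted balances along runs: in a finite labeled graph (labels of
length ≤ h) whose primitive cycles all have nonpositive x-weighted label balance, the word f
read along any finite path π satisfies ⟨x, φ(f)⟩ ≤ N·h·(max_i x_i), where N = card V. -/
theorem wbal_path_bound {n : ℕ} {V E : Type*} [Fintype V]
    (src tgt : E → V) (lab : E → Word n) (x : Fin n → ℕ) (h : ℕ)
    (hlab : ∀ e : E, (lab e).length ≤ h)
    (hprim : ∀ es : List E, IsPrimitiveCycle src tgt es →
      wbal x ((es.map lab).flatten) ≤ 0)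
    (π : List E) (hπ : IsWalk src tgt π) :
    wbal x ((π.map lab).flatten)
      ≤ ((Fintype.card V * h * Finset.univ.sup x : ℕ) : ℤ) := by
  have hsum0 : (0:ℤ) ≤ ((Fintype.card V * h * Finset.univ.sup x : ℕ) : ℤ) :=
    Int.ofNat_nonneg _
  have hedge : ∀ e : E, wbal x (lab e) ≤ ((h * Finset.univ.sup x : ℕ) : ℤ) := by
    intro e
    refine le_trans (wbal_le_length x (lab e)) ?_
    push_cast
    have h1 : ((lab e).length : ℤ) ≤ (h : ℤ) := by exact_mod_cast hlab e
    have h2 : (0:ℤ) ≤ ((Finset.univ.sup x : ℕ) : ℤ) := Int.ofNat_nonneg _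
    nlinarith
  suffices H : ∀ (N : ℕ) (es : List E), es.length ≤ N → IsWalk src tgt es →
      wbal x ((es.map lab).flatten)
        ≤ ((Fintype.card V * h * Finset.univ.sup x : ℕ) : ℤ) by
    exact H π.length π le_rfl hπ
  intro N
  induction N using Nat.strong_induction_on with
  | _ N ih =>
    intro es hlen hwalk
    by_cases hnd : (es.map src).Nodup
    · have hcard : es.length ≤ Fintype.card V := by
        have := hnd.length_le_card
        simpa using this
      rw [wbal_flatten_map]
      have hb : (es.map (fun e => wbal x (lab e))).sum
          ≤ (es.map (fun e => wbal x (lab e))).length • ((h * Finset.univ.sup x : ℕ) : ℤ) := by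
        refine List.sum_le_card_nsmul _ _ ?_
        intro z hz
        simp only [List.mem_map] at hz
        obtain ⟨e, _, rfl⟩ := hz
        exact hedge e
      refine le_trans hb ?_
      rw [List.length_map]
      push_cast
      rw [nsmul_eq_mul]
      have h1 : (es.length : ℤ) ≤ (Fintype.card V : ℤ) := by exact_mod_cast hcard
      have h2 : (0:ℤ) ≤ (h : ℤ) * ((Finset.univ.sup x : ℕ) : ℤ) := by positivity
      nlinarith
    · obtain ⟨p, q, hpq, hq, heq⟩ := exists_dup hnd
      rw [List.length_map] at hq
      simp only [List.getElem_map] at heq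
      obtain ⟨hsplit, hBcl, houter, _⟩ := split_dup src tgt hwalk hpq hq heq
      set f : E → ℤ := fun e => wbal x (lab e) with hf
      have hsum : (es.map f).sum
          = ((es.take p).map f).sum + (((es.drop p).take (q - p)).map f).sum
            + ((es.drop q).map f).sum := by
        conv_lhs => rw [hsplit]
        simp only [List.map_append, List.sum_append]
      have hB : (((es.drop p).take (q - p)).map f).sum ≤ 0 := by
        rw [← wbal_flatten_map]
        exact closed_nonpos src tgt lab x hprim _ _ le_rfl hBcl
      have hO : ((es.take p).map f).sum + ((es.drop q).map f).sum
          ≤ ((Fintype.card V * h * Finset.univ.sup x : ℕ) : ℤ) := by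
        have := ih (es.length - (q - p)) (by omega) (es.take p ++ es.drop q)
          (by rw [List.length_append, List.length_take, List.length_drop]; omega)
          houter
        rw [wbal_flatten_map] at this
        simpa [List.sum_append] using this
      rw [wbal_flatten_map, hsum]
      linarith
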